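/- Let G be a finite group with no element of order pq for any prime q ≠ p, and suppose a Sylow p-subgroup S of G is abelian. Then S is a trivial intersection subgroup: for all g ∈ G, either g normalizes S or S ∩ gSg⁻¹ is trivial. -/

import Mathlib

theorem stmt8 (p : ℕ) [Fact p.Prime] (G : Type*) [Group G] [Finite G]
    (hiso : ∀ g : G, ∀ q : ℕ, q.Prime → q ≠ p → orderOf g ≠ p * q)
    (S : Sylow p G) (hab : IsMulCommutative (S : Subgroup G)) :
    ∀ g : G, g ∈ Subgroup.normalizer ((S : Subgroup G) : Set G) ∨
      (S : Subgroup G) ⊓ (S : Subgroup G).map (MulAut.conj g).toMonoidHom = ⊥ := by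
  haveI := hab
  have hp := (Fact.out : p.Prime)
  intro g
  rcases eq_or_ne ((S : Subgroup G) ⊓ (S : Subgroup G).map (MulAut.conj g).toMonoidHom) ⊥
    with h | h
  · exact Or.inr h
  left
  -- obtain a nontrivial element x of the intersection
  obtain ⟨x, hx, hx1⟩ := (Subgroup.bot_or_exists_ne_one _).resolve_left h
  have hxS : x ∈ (S : Subgroup G) := hx.1
  have hxT : x ∈ (S : Subgroup G).map (MulAut.conj g).toMonoidHom := hx.2
  -- x has order a power of p; get z of order p
  obtain ⟨k, hk⟩ := (IsPGroup.iff_orderOf.mp S.isPGroup') ⟨x, hxS⟩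
  have hk' : orderOf x = p ^ k := by
    have := hk
    rwa [Subgroup.orderOf_mk] at this
  have hkpos : k ≠ 0 := by
    rintro rfl
    simp only [pow_zero, orderOf_eq_one_iff] at hk'
    exact hx1 hk'
  set z := x ^ (p ^ (k - 1)) with hz
  have hordz : orderOf z = p := by
    rw [hz, orderOf_pow, hk', Nat.gcd_eq_right (pow_dvd_pow p (Nat.sub_le k 1)),
      ← pow_sub_mul_pow p (Nat.sub_le k 1)]
    rw [Nat.sub_sub_self (Nat.one_le_iff_ne_zero.mpr hkpos), pow_one]
    exact Nat.mul_div_cancel _ (pow_pos hp.pos _)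
  have hzS : z ∈ (S : Subgroup G) := pow_mem hxS _
  have hzT : z ∈ (S : Subgroup G).map (MulAut.conj g).toMonoidHom := pow_mem hxT _
  -- the centralizer of z is a p-group
  have hC : IsPGroup p (Subgroup.centralizer {z}) := by
    rw [IsPGroup.iff_orderOf]
    intro y
    by_contra hy
    set n := orderOf (y : G) with hn
    have hny : orderOf y = n := by rw [hn, Subgroup.orderOf_mk]
    have hn0 : n ≠ 0 := by
      have : 0 < orderOf (y : G) := by
        have : IsOfFinOrder (y : G) := isOfFinOrder_of_finite _
        exact this.orderOf_pos
      omega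
    -- find a prime q ≠ p dividing n
    have hnp : ¬ ∃ k, n = p ^ k := by
      rintro ⟨k, hk⟩
      exact hy ⟨k, hny.trans hk⟩
    have hm : (n / p ^ n.factorization p) ≠ 1 := by
      intro h1
      exact hnp ⟨n.factorization p, by
        have := Nat.ordProj_mul_ordCompl_eq_self n p
        rw [show ordCompl[p] n = 1 from h1, mul_one] at this; omega⟩
    obtain ⟨q, hq, hqd⟩ := Nat.exists_prime_and_dvd hm
    have hqp : q ≠ p := by
      rintro rfl
      exact (Nat.not_dvd_ordCompl hq hn0) hqd
    have hqn : q ∣ n := hqd.trans (Nat.ordCompl_dvd n p)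
    -- y ^ (n / q) has order q and commutes with z
    set w := (y : G) ^ (n / q) with hw
    have hordw : orderOf w = q := by
      rw [hw, orderOf_pow, ← hn, Nat.gcd_eq_right (Nat.div_dvd_of_dvd hqn),
        Nat.div_div_self hqn hn0]
    have hcomm : Commute z w := by
      have := y.2
      rw [Subgroup.mem_centralizer_iff] at this
      have hzy : Commute z (y : G) := this z (Set.mem_singleton z)
      exact hzy.pow_right _
    have hcop : (orderOf z).Coprime (orderOf w) := by
      rw [hordz, hordw]
      exact (Nat.coprime_primes hp hq).mpr (Ne.symm hqp)
    have := hcomm.orderOf_mul_eq_mul_orderOf_of_coprime hcop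
    rw [hordz, hordw] at this
    exact hiso (z * w) q hq hqp this
  -- S ≤ centralizer, so centralizer = S
  have hSC : (S : Subgroup G) ≤ Subgroup.centralizer {z} := by
    intro s hs
    rw [Subgroup.mem_centralizer_iff]
    rintro a ha
    rw [Set.mem_singleton_iff] at ha
    subst ha
    exact Subgroup.mul_comm_of_mem_isMulCommutative _ hzS hs
  have hCS : Subgroup.centralizer {z} = (S : Subgroup G) := S.3 hC hSC
  -- gSg⁻¹ ≤ centralizer = S
  haveI : IsMulCommutative ((S : Subgroup G).map (MulAut.conj g).toMonoidHom) :=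
    Subgroup.map_isMulCommutative _ _
  have hTC : (S : Subgroup G).map (MulAut.conj g).toMonoidHom ≤ Subgroup.centralizer {z} := by
    intro s hs
    rw [Subgroup.mem_centralizer_iff]
    rintro a ha
    rw [Set.mem_singleton_iff] at ha
    subst ha
    exact Subgroup.mul_comm_of_mem_isMulCommutative _ hzT hs
  rw [hCS] at hTC
  -- now g • S ≤ S as Sylow subgroups, hence equal
  have hcoe : ((g • S : Sylow p G) : Subgroup G) = (S : Subgroup G).map (MulAut.conj g).toMonoidHom := by
    rw [Sylow.coe_subgroup_smul, Subgroup.pointwise_smul_def]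
    rfl
  have : ((S : Subgroup G) : Subgroup G) = ((g • S : Sylow p G) : Subgroup G) :=
    (g • S).3 S.isPGroup' (by rw [hcoe]; exact hTC)
  have hgs : g • S = S := Sylow.ext this.symm
  exact Sylow.smul_eq_iff_mem_normalizer.mp hgs
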